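/- No bad length-three path exists for the projected matching: let I be an SMTI-1TM instance, I' its translated SMI instance, M' a stable matching of I', M the projection of M', and N any (weakly) stable matching of I. Then there do not exist men m_i, m_k and women w_j, w_ℓ such that (m_i,w_j) ∈ N, (m_k,w_ℓ) ∈ N, (m_k,w_j) ∈ M, m_i is single in M, and w_ℓ is single in M. -/

import Mathlib

/-- An instance of the stable marriage problem with ties and incomplete lists (SMTI),
with men of type `α` and women of type `β`.  Each person's preference list is
represented by a rank function: `mpref m w = none` means woman `w` is unacceptable
to man `m`, and `mpref m w = some r` means `w` is acceptable with rank `r`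
(smaller rank = more preferred; equal ranks = a tie).  This encodes exactly a
total preorder on the set of acceptable partners. -/
structure SMInst (α β : Type) where
  mpref : α → β → Option ℕ
  wpref : β → α → Option ℕ

namespace SMInst

variable {α β : Type}

/-- Woman `w` is acceptable to man `m`. -/
def mAcc (I : SMInst α β) (m : α) (w : β) : Prop := (I.mpref m w).isSome

/-- Man `m` is acceptable to woman `w`. -/
def wAcc (I : SMInst α β) (w : β) (m : α) : Prop := (I.wpref w m).isSome

/-- Man `m` strictly prefers woman `w` to woman `w'`. -/
def mPref (I : SMInst α β) (m : α) (w w' : β) : Prop :=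
  ∃ r r', I.mpref m w = some r ∧ I.mpref m w' = some r' ∧ r < r'

/-- Woman `w` strictly prefers man `m` to man `m'`. -/
def wPref (I : SMInst α β) (w : β) (m m' : α) : Prop :=
  ∃ r r', I.wpref w m = some r ∧ I.wpref w m' = some r' ∧ r < r'

/-- `M` is a matching of `I`: all pairs mutually acceptable and no person in two pairs. -/
def IsMatching (I : SMInst α β) (M : Finset (α × β)) : Prop :=
  (∀ p ∈ M, I.mAcc p.1 p.2 ∧ I.wAcc p.2 p.1) ∧
  (∀ p ∈ M, ∀ q ∈ M, p.1 = q.1 → p = q) ∧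
  (∀ p ∈ M, ∀ q ∈ M, p.2 = q.2 → p = q)

/-- Man `m` is single (unmatched) in `M`. -/
def mSingle (M : Finset (α × β)) (m : α) : Prop := ∀ w, (m, w) ∉ M

/-- Woman `w` is single (unmatched) in `M`. -/
def wSingle (M : Finset (α × β)) (w : β) : Prop := ∀ m, (m, w) ∉ M

/-- `(m, w)` blocks `M` in instance `I`. -/
def Blocks (I : SMInst α β) (M : Finset (α × β)) (m : α) (w : β) : Prop :=
  I.mAcc m w ∧ I.wAcc w m ∧
  (mSingle M m ∨ ∃ w', (m, w') ∈ M ∧ I.mPref m w w') ∧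
  (wSingle M w ∨ ∃ m', (m', w) ∈ M ∧ I.wPref w m m')

/-- `M` is a (weakly) stable matching of `I`. -/
def IsStable (I : SMInst α β) (M : Finset (α × β)) : Prop :=
  I.IsMatching M ∧ ∀ m w, ¬ I.Blocks M m w

/-- Man `m` prefers matching `M'` to matching `M`, with respect to his list in `I`:
he is matched in `M'` to an acceptable partner, and he is either single in `M`
or strictly prefers his `M'`-partner to his `M`-partner. -/
def mPrefMatching (I : SMInst α β) (m : α) (M' M : Finset (α × β)) : Prop :=
  ∃ w, (m, w) ∈ M' ∧ I.mAcc m w ∧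
    (mSingle M m ∨ ∃ w', (m, w') ∈ M ∧ I.mPref m w w')

/-- Woman `w` prefers matching `M'` to matching `M`, with respect to her list in `I`. -/
def wPrefMatching (I : SMInst α β) (w : β) (M' M : Finset (α × β)) : Prop :=
  ∃ m, (m, w) ∈ M' ∧ I.wAcc w m ∧
    (wSingle M w ∨ ∃ m', (m', w) ∈ M ∧ I.wPref w m m')

/-- `I` and `I'` differ only in man `m`'s preference list. -/
def mDiffOnly (I I' : SMInst α β) (m : α) : Prop :=
  I.wpref = I'.wpref ∧ ∀ m', m' ≠ m → I.mpref m' = I'.mpref m'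

/-- `I` and `I'` differ only in woman `w`'s preference list. -/
def wDiffOnly (I I' : SMInst α β) (w : β) : Prop :=
  I.mpref = I'.mpref ∧ ∀ w', w' ≠ w → I.wpref w' = I'.wpref w'

/-- Men's lists contain no ties. -/
def MStrict (I : SMInst α β) : Prop :=
  ∀ m w w', I.mpref m w = I.mpref m w' → I.mAcc m w → w = w'

/-- Women's lists contain no ties. -/
def WStrict (I : SMInst α β) : Prop :=
  ∀ w m m', I.wpref w m = I.wpref w m' → I.wAcc w m → m = m'

/-- `I` is an SMI instance: no ties at all (all lists strictly ordered). -/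
def NoTies (I : SMInst α β) : Prop := I.MStrict ∧ I.WStrict

/-- `I` is an SMTI-1TM instance: ties may occur only in men's lists,
i.e. women's lists are strictly ordered. -/
def OneTM (I : SMInst α β) : Prop := I.WStrict

/-- `I'` is obtained from `I` by breaking ties: same acceptable sets, and every
strict preference of `I` is preserved in `I'` (so each person's list in `I'` is a
linear extension of the corresponding total preorder in `I`). -/
def Refines (I I' : SMInst α β) : Prop :=
  (∀ m w, I.mAcc m w ↔ I'.mAcc m w) ∧
  (∀ w m, I.wAcc w m ↔ I'.wAcc w m) ∧
  (∀ m w w', I.mPref m w w' → I'.mPref m w w') ∧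
  (∀ w m m', I.wPref w m m' → I'.wPref w m m')

end SMInst

namespace SMInst

/-- The translation of an SMTI-1TM instance `I` (with men/women indexed by `Fin n`)
into an SMI instance `I'`.  Men of `I'`: `Sum.inl i` is `a_i`, `Sum.inr j` is `b_j`.
Women of `I'`: `Sum.inl j` is `s_j`, `Sum.inr j` is `t_j`.
The strict list of `a_i` replaces each tie `(w_{j_1} … w_{j_k})` (indices increasing)
of `m_i`'s list by the strict segment `t_{j_1} … t_{j_k} s_{j_1} … s_{j_k}`;
`b_j`'s list is `s_j t_j`; `s_j`'s list is `Q(w_j)` followed by `b_j`; and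
`t_j`'s list is `b_j` followed by `Q(w_j)`, where `Q(w_j)` is `w_j`'s list with
each `m_i` replaced by `a_i`. -/
def translate {n : ℕ} (I : SMInst (Fin n) (Fin n)) :
    SMInst (Fin n ⊕ Fin n) (Fin n ⊕ Fin n) where
  mpref := fun a w =>
    match a, w with
    | Sum.inl i, Sum.inl j =>
        (I.mpref i j).map fun r =>
          2 * n * r + n +
            (Finset.univ.filter fun j' : Fin n => I.mpref i j' = some r ∧ j' < j).card
    | Sum.inl i, Sum.inr j =>
        (I.mpref i j).map fun r =>
          2 * n * r +
            (Finset.univ.filter fun j' : Fin n => I.mpref i j' = some r ∧ j' < j).card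
    | Sum.inr i, Sum.inl j => if j = i then some 0 else none
    | Sum.inr i, Sum.inr j => if j = i then some 1 else none
  wpref := fun w a =>
    match w, a with
    | Sum.inl j, Sum.inl i => I.wpref j i
    | Sum.inl j, Sum.inr i =>
        if i = j then some ((Finset.univ.sup fun i' : Fin n => (I.wpref j i').getD 0) + 1)
        else none
    | Sum.inr j, Sum.inl i => (I.wpref j i).map (· + 1)
    | Sum.inr j, Sum.inr i => if i = j then some 0 else none

/-- The projection of a matching `M'` of the translated instance back to the
original instance: `M = {(m_i, w_j) : (a_i, s_j) ∈ M' ∨ (a_i, t_j) ∈ M'}`. -/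
def projectM {n : ℕ} (M' : Finset ((Fin n ⊕ Fin n) × (Fin n ⊕ Fin n))) :
    Finset (Fin n × Fin n) :=
  Finset.univ.filter fun p =>
    (Sum.inl p.1, Sum.inl p.2) ∈ M' ∨ (Sum.inl p.1, Sum.inr p.2) ∈ M'

end SMInst


namespace SMInst

variable {n : ℕ} (I : SMInst (Fin n) (Fin n))

lemma tr_mp_ll (i j : Fin n) : (translate I).mpref (Sum.inl i) (Sum.inl j) =
    (I.mpref i j).map (fun r => 2 * n * r + n +
      (Finset.univ.filter fun j' : Fin n => I.mpref i j' = some r ∧ j' < j).card) := rfl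

lemma tr_mp_lr (i j : Fin n) : (translate I).mpref (Sum.inl i) (Sum.inr j) =
    (I.mpref i j).map (fun r => 2 * n * r +
      (Finset.univ.filter fun j' : Fin n => I.mpref i j' = some r ∧ j' < j).card) := rfl

lemma tr_mp_rl (i j : Fin n) : (translate I).mpref (Sum.inr i) (Sum.inl j) =
    if j = i then some 0 else none := rfl

lemma tr_mp_rr (i j : Fin n) : (translate I).mpref (Sum.inr i) (Sum.inr j) =
    if j = i then some 1 else none := rfl

lemma tr_wp_ll (j i : Fin n) : (translate I).wpref (Sum.inl j) (Sum.inl i) = I.wpref j i := rfl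

lemma tr_wp_lr (j i : Fin n) : (translate I).wpref (Sum.inl j) (Sum.inr i) =
    if i = j then some ((Finset.univ.sup fun i' : Fin n => (I.wpref j i').getD 0) + 1)
    else none := rfl

lemma tr_wp_rl (j i : Fin n) : (translate I).wpref (Sum.inr j) (Sum.inl i) =
    (I.wpref j i).map (· + 1) := rfl

lemma tr_wp_rr (j i : Fin n) : (translate I).wpref (Sum.inr j) (Sum.inr i) =
    if i = j then some 0 else none := rfl

end SMInst

/-- No bad length-three path exists for the projected matching: if `M` is the
projection of a stable matching `M'` of the translated instance and `N` is any
(weakly) stable matching of `I`, then there do not exist men `m_i, m_k` and women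
`w_j, w_ℓ` with `(m_i,w_j) ∈ N`, `(m_k,w_ℓ) ∈ N`, `(m_k,w_j) ∈ M`, `m_i` single in
`M`, and `w_ℓ` single in `M`. -/
theorem projection_no_bad_path {n : ℕ}
    (I : SMInst (Fin n) (Fin n)) (h1tm : I.OneTM)
    (M' : Finset ((Fin n ⊕ Fin n) × (Fin n ⊕ Fin n)))
    (hM' : (SMInst.translate I).IsStable M')
    (N : Finset (Fin n × Fin n)) (hN : I.IsStable N) :
    ¬ ∃ (mi mk wj wl : Fin n),
        (mi, wj) ∈ N ∧ (mk, wl) ∈ N ∧ (mk, wj) ∈ SMInst.projectM M' ∧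
        SMInst.mSingle (SMInst.projectM M') mi ∧
        SMInst.wSingle (SMInst.projectM M') wl := by
  rintro ⟨mi, mk, wj, wl, hmiwj, hmkwl, hmkwj, hmiS, hwlS⟩
  obtain ⟨⟨hM'acc, hM'm, hM'w⟩, hM'st⟩ := hM'
  obtain ⟨⟨hNacc, _hNm, hNw⟩, hNst⟩ := hN
  have npos : 0 < n := mi.pos
  -- acceptability facts from N
  obtain ⟨rij, hrij⟩ := Option.isSome_iff_exists.mp (hNacc _ hmiwj).1
  obtain ⟨uji, huji⟩ := Option.isSome_iff_exists.mp (hNacc _ hmiwj).2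
  obtain ⟨rkl, hrkl⟩ := Option.isSome_iff_exists.mp (hNacc _ hmkwl).1
  obtain ⟨ulk, hulk⟩ := Option.isSome_iff_exists.mp (hNacc _ hmkwl).2
  -- membership in M' from projection
  simp only [SMInst.projectM, Finset.mem_filter, Finset.mem_univ, true_and] at hmkwj
  -- singleness transferred to M'
  have hmi' : ∀ j : Fin n, (Sum.inl mi, Sum.inl j) ∉ M' ∧ (Sum.inl mi, Sum.inr j) ∉ M' := by
    intro j
    have h := hmiS j
    simp only [SMInst.projectM, Finset.mem_filter, Finset.mem_univ, true_and, not_or] at h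
    exact h
  have hwl' : ∀ i : Fin n, (Sum.inl i, Sum.inl wl) ∉ M' ∧ (Sum.inl i, Sum.inr wl) ∉ M' := by
    intro i
    have h := hwlS i
    simp only [SMInst.projectM, Finset.mem_filter, Finset.mem_univ, true_and, not_or] at h
    exact h
  have haiS : SMInst.mSingle M' (Sum.inl mi) := by
    intro w hw
    cases w with
    | inl j => exact (hmi' j).1 hw
    | inr j => exact (hmi' j).2 hw
  -- mi ≠ mk
  have hmine : mi ≠ mk := by
    rintro rfl
    have hq : ((mi, wj) : Fin n × Fin n) = (mi, wl) := _hNm _ hmiwj _ hmkwl rfl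
    have : wj = wl := congrArg Prod.snd hq
    subst this
    rcases hmkwj with h | h
    · exact (hwl' mi).1 h
    · exact (hwl' mi).2 h
  -- partner-shape facts
  have bpart : ∀ (x : Fin n) (w), (Sum.inr x, w) ∈ M' → w = Sum.inl x ∨ w = Sum.inr x := by
    intro x w hw
    have h := (hM'acc _ hw).1
    cases w with
    | inl j =>
      by_cases hjx : j = x
      · exact Or.inl (by rw [hjx])
      · simp [SMInst.mAcc, SMInst.tr_mp_rl, hjx] at h
    | inr j =>
      by_cases hjx : j = x
      · exact Or.inr (by rw [hjx])
      · simp [SMInst.mAcc, SMInst.tr_mp_rr, hjx] at h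
  have spart : ∀ (x : Fin n) (m), (m, Sum.inl x) ∈ M' → (∃ i, m = Sum.inl i) ∨ m = Sum.inr x := by
    intro x m hm
    have h := (hM'acc _ hm).2
    cases m with
    | inl i => exact Or.inl ⟨i, rfl⟩
    | inr i =>
      by_cases hix : i = x
      · exact Or.inr (by rw [hix])
      · simp [SMInst.wAcc, SMInst.tr_wp_lr, hix] at h
  have tpart : ∀ (x : Fin n) (m), (m, Sum.inr x) ∈ M' → (∃ i, m = Sum.inl i) ∨ m = Sum.inr x := by
    intro x m hm
    have h := (hM'acc _ hm).2
    cases m with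
    | inl i => exact Or.inl ⟨i, rfl⟩
    | inr i =>
      by_cases hix : i = x
      · exact Or.inr (by rw [hix])
      · simp [SMInst.wAcc, SMInst.tr_wp_rr, hix] at h
  -- every b_x is matched to s_x or t_x
  have bmat : ∀ x : Fin n, (Sum.inr x, Sum.inl x) ∈ M' ∨ (Sum.inr x, Sum.inr x) ∈ M' := by
    intro x
    by_contra h
    push_neg at h
    obtain ⟨h1, h2⟩ := h
    have hbS : SMInst.mSingle M' (Sum.inr x) := by
      intro w hw
      rcases bpart x w hw with rfl | rfl
      · exact h1 hw
      · exact h2 hw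
    refine hM'st (Sum.inr x) (Sum.inr x) ⟨?_, ?_, Or.inl hbS, ?_⟩
    · simp [SMInst.mAcc, SMInst.tr_mp_rr]
    · simp [SMInst.wAcc, SMInst.tr_wp_rr]
    · by_cases hts : SMInst.wSingle M' (Sum.inr x)
      · exact Or.inl hts
      · right
        simp only [SMInst.wSingle] at hts
        push_neg at hts
        obtain ⟨m', hm'⟩ := hts
        refine ⟨m', hm', ?_⟩
        rcases tpart x m' hm' with ⟨i, rfl⟩ | rfl
        · have hacc := (hM'acc _ hm').2
          simp only [SMInst.wAcc, SMInst.tr_wp_rl, Option.isSome_map] at hacc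
          obtain ⟨u, hu⟩ := Option.isSome_iff_exists.mp hacc
          exact ⟨0, u + 1, by simp [SMInst.tr_wp_rr], by simp [SMInst.tr_wp_rl, hu], Nat.succ_pos u⟩
        · exact absurd hm' h2
  -- a_k is matched to s_j
  have haks : (Sum.inl mk, Sum.inl wj) ∈ M' := by
    rcases hmkwj with h | hakt
    · exact h
    · exfalso
      have hbjs : (Sum.inr wj, Sum.inl wj) ∈ M' := by
        rcases bmat wj with h | h
        · exact h
        · have := hM'w _ h _ hakt rfl
          simp at this
      refine hM'st (Sum.inl mi) (Sum.inl wj)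
        ⟨?_, ?_, Or.inl haiS, Or.inr ⟨Sum.inr wj, hbjs, ?_⟩⟩
      · simp [SMInst.mAcc, SMInst.tr_mp_ll, hrij]
      · simp [SMInst.wAcc, SMInst.tr_wp_ll, huji]
      · refine ⟨uji, (Finset.univ.sup fun i' : Fin n => (I.wpref wj i').getD 0) + 1, ?_, ?_, ?_⟩
        · simpa [SMInst.tr_wp_ll] using huji
        · simp [SMInst.tr_wp_lr]
        · have hle : uji ≤ Finset.univ.sup fun i' : Fin n => (I.wpref wj i').getD 0 := by
            have h := Finset.le_sup (f := fun i' : Fin n => (I.wpref wj i').getD 0)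
              (Finset.mem_univ mi)
            simpa [huji] using h
          omega
  -- rank of mk in wj's list
  have hujk' := (hM'acc _ haks).2
  simp only [SMInst.wAcc, SMInst.tr_wp_ll] at hujk'
  obtain ⟨ujk, hujk⟩ := Option.isSome_iff_exists.mp hujk'
  -- rank of wj in mk's list
  have hrkj' := (hM'acc _ haks).1
  simp only [SMInst.mAcc, SMInst.tr_mp_ll, Option.isSome_map] at hrkj'
  obtain ⟨rkj, hrkj⟩ := Option.isSome_iff_exists.mp hrkj'
  -- wj strictly prefers mk to mi
  have hwjpref : I.wPref wj mk mi := by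
    have hnp : ¬ (SMInst.translate I).wPref (Sum.inl wj) (Sum.inl mi) (Sum.inl mk) := by
      intro hp
      exact hM'st (Sum.inl mi) (Sum.inl wj)
        ⟨by simp [SMInst.mAcc, SMInst.tr_mp_ll, hrij],
         by simp [SMInst.wAcc, SMInst.tr_wp_ll, huji],
         Or.inl haiS, Or.inr ⟨Sum.inl mk, haks, hp⟩⟩
    have hle : ujk ≤ uji := by
      by_contra hlt
      exact hnp ⟨uji, ujk, by simpa [SMInst.tr_wp_ll] using huji,
        by simpa [SMInst.tr_wp_ll] using hujk, by omega⟩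
    have hne : ujk ≠ uji := by
      intro he
      exact hmine (h1tm wj mi mk (by rw [huji, hujk, he]) (hNacc _ hmiwj).2)
    exact ⟨ujk, uji, hujk, huji, lt_of_le_of_ne hle hne⟩
  -- b_l is matched to s_l
  have hbls : (Sum.inr wl, Sum.inl wl) ∈ M' := by
    rcases bmat wl with h | hblt
    · exact h
    · exfalso
      have hslS : SMInst.wSingle M' (Sum.inl wl) := by
        intro m hm
        rcases spart wl m hm with ⟨i, rfl⟩ | rfl
        · exact (hwl' i).1 hm
        · have := hM'm _ hm _ hblt rfl
          simp at this
      exact hM'st (Sum.inr wl) (Sum.inl wl)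
        ⟨by simp [SMInst.mAcc, SMInst.tr_mp_rl],
         by simp [SMInst.wAcc, SMInst.tr_wp_lr],
         Or.inr ⟨Sum.inr wl, hblt,
           ⟨0, 1, by simp [SMInst.tr_mp_rl], by simp [SMInst.tr_mp_rr], one_pos⟩⟩,
         Or.inl hslS⟩
  -- t_l is single
  have htlS : SMInst.wSingle M' (Sum.inr wl) := by
    intro m hm
    rcases tpart wl m hm with ⟨i, rfl⟩ | rfl
    · exact (hwl' i).2 hm
    · have := hM'm _ hm _ hbls rfl
      simp at this
  -- mk strictly prefers wj to wl
  have hmkpref : I.mPref mk wj wl := by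
    have hnp2 : ¬ (SMInst.translate I).mPref (Sum.inl mk) (Sum.inr wl) (Sum.inl wj) := by
      intro hp
      exact hM'st (Sum.inl mk) (Sum.inr wl)
        ⟨by simp [SMInst.mAcc, SMInst.tr_mp_lr, hrkl],
         by simp [SMInst.wAcc, SMInst.tr_wp_rl, hulk],
         Or.inr ⟨Sum.inl wj, haks, hp⟩, Or.inl htlS⟩
    set cL := (Finset.univ.filter fun j' : Fin n => I.mpref mk j' = some rkl ∧ j' < wl).card
      with hcLdef
    set cJ := (Finset.univ.filter fun j' : Fin n => I.mpref mk j' = some rkj ∧ j' < wj).card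
      with hcJdef
    have harith : 2 * n * rkj + n + cJ ≤ 2 * n * rkl + cL := by
      by_contra hc
      push_neg at hc
      refine hnp2 ⟨2 * n * rkl + cL, 2 * n * rkj + n + cJ, ?_, ?_, hc⟩
      · rw [SMInst.tr_mp_lr, hrkl]; rfl
      · rw [SMInst.tr_mp_ll, hrkj]; rfl
    have hcL : cL < n := by
      have hsub : (Finset.univ.filter fun j' : Fin n => I.mpref mk j' = some rkl ∧ j' < wl)
          ⊆ Finset.univ.erase wl := by
        intro x hx
        exact Finset.mem_erase.mpr ⟨ne_of_lt (Finset.mem_filter.mp hx).2.2, Finset.mem_univ _⟩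
      have hcard := Finset.card_le_card hsub
      rw [Finset.card_erase_of_mem (Finset.mem_univ wl)] at hcard
      simp only [Finset.card_univ, Fintype.card_fin] at hcard
      omega
    have key : 2 * n * rkj < 2 * n * rkl := by
      set A := 2 * n * rkj with hA
      set B := 2 * n * rkl with hB
      omega
    exact ⟨rkj, rkl, hrkj, hrkl, lt_of_mul_lt_mul_left key (Nat.zero_le _)⟩
  -- (mk, wj) blocks N : contradiction
  exact hNst mk wj
    ⟨Option.isSome_iff_exists.mpr ⟨rkj, hrkj⟩, Option.isSome_iff_exists.mpr ⟨ujk, hujk⟩,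
     Or.inr ⟨wl, hmkwl, hmkpref⟩, Or.inr ⟨mi, hmiwj, hwjpref⟩⟩
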